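/- arXiv:1203.3291 — 2 statements merged into one kernel-verified Lean document; each statement's English description precedes it below -/
import Mathlib

section
/- If W : [0,∞)×[0,∞) → ℝ is C¹ in r and satisfies |W(u,s)| ≤ x(1+u+s)^{-2} and |∂_r W(u,s)| ≤ x(1+u+s)^{-3} for all s ≥ 0, then |W(u,r) − W̄(u,r)| ≤ x r / (2(1+u)(1+u+r)²), where W̄(u,r) = (1/r)∫₀^r W(u,s) ds. -/
open MeasureTheory intervalIntegral

/-- The radial average `W̄(u,r) = (1/r)∫₀^r W(u,s) ds`, extended by `W̄(u,0) = W(u,0)`. -/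
noncomputable def radAvg (W : ℝ → ℝ → ℝ) (u r : ℝ) : ℝ :=
  if r = 0 then W u 0 else (1 / r) * ∫ s in (0:ℝ)..r, W u s

theorem stmt1 (W W' : ℝ → ℝ → ℝ)
    (hderiv : ∀ u s : ℝ, HasDerivAt (W u) (W' u s) s)
    (hW'cont : ∀ u : ℝ, Continuous (W' u))
    (u r x : ℝ) (hu : 0 ≤ u) (hr : 0 ≤ r) (hx : 0 ≤ x)
    (hbound : ∀ s, 0 ≤ s → |W u s| ≤ x / (1 + u + s) ^ 2)
    (hbound' : ∀ s, 0 ≤ s → |W' u s| ≤ x / (1 + u + s) ^ 3) :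
    |W u r - radAvg W u r| ≤ x * r / (2 * (1 + u) * (1 + u + r) ^ 2) := by
  rcases eq_or_lt_of_le hr with h0 | h0
  · simp [radAvg, ← h0]
  have hrne : r ≠ 0 := ne_of_gt h0
  have hWcont : Continuous (W u) :=
    continuous_iff_continuousAt.2 fun s => (hderiv u s).continuousAt
  have hu1 : (0:ℝ) < 1 + u := by linarith
  have hur : (0:ℝ) < 1 + u + r := by linarith
  have hpos : ∀ t : ℝ, 0 ≤ t → (0:ℝ) < 1 + u + t := fun t ht => by linarith
  -- increment bound
  have hkey : ∀ s ∈ Set.Icc (0:ℝ) r,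
      |W u r - W u s| ≤ x/2 * ((1+u+s)^2)⁻¹ - x/2 * ((1+u+r)^2)⁻¹ := by
    rintro s ⟨hs, hsr⟩
    have hftc : ∫ t in s..r, W' u t = W u r - W u s :=
      intervalIntegral.integral_eq_sub_of_hasDerivAt
        (fun t _ => hderiv u t) ((hW'cont u).intervalIntegrable s r)
    have hd3 : ∀ t ∈ Set.uIcc s r,
        HasDerivAt (fun t => -(x/2) * ((1+u+t)^2)⁻¹) (x / (1+u+t)^3) t := by
      intro t ht
      rw [Set.uIcc_of_le hsr] at ht
      have ht0 : 0 ≤ t := le_trans hs ht.1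
      have htp : (0:ℝ) < 1 + u + t := hpos t ht0
      have h1 : HasDerivAt (fun t : ℝ => 1 + u + t) 1 t := (hasDerivAt_id t).const_add (1+u)
      have h2 : HasDerivAt (fun t : ℝ => (1+u+t)^2) (2 * (1+u+t)^1 * 1) t := h1.pow 2
      have h3 := (h2.inv (by positivity)).const_mul (-(x/2))
      refine h3.congr_deriv ?_
      field_simp
    have hcont3 : ContinuousOn (fun t => x / (1+u+t)^3) (Set.uIcc s r) := by
      apply ContinuousOn.div continuousOn_const (by fun_prop)
      intro t ht
      rw [Set.uIcc_of_le hsr] at ht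
      have := hpos t (le_trans hs ht.1)
      positivity
    have hint3 : IntervalIntegrable (fun t => x / (1+u+t)^3) volume s r :=
      hcont3.intervalIntegrable
    have hftc3 : ∫ t in s..r, x / (1+u+t)^3
        = x/2 * ((1+u+s)^2)⁻¹ - x/2 * ((1+u+r)^2)⁻¹ := by
      rw [intervalIntegral.integral_eq_sub_of_hasDerivAt hd3 hint3]
      ring
    rw [← hftc, ← hftc3]
    calc |∫ t in s..r, W' u t| ≤ ∫ t in s..r, |W' u t| :=
          intervalIntegral.abs_integral_le_integral_abs hsr
      _ ≤ ∫ t in s..r, x / (1+u+t)^3 := by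
          apply intervalIntegral.integral_mono_on hsr
            ((hW'cont u).abs.intervalIntegrable s r) hint3
          intro t ht
          exact hbound' t (le_trans hs ht.1)
  -- rewrite the difference
  have hWint : IntervalIntegrable (W u) volume 0 r := hWcont.intervalIntegrable 0 r
  have hdiff : W u r - radAvg W u r = (1/r) * ∫ s in (0:ℝ)..r, (W u r - W u s) := by
    rw [radAvg, if_neg hrne, intervalIntegral.integral_sub intervalIntegrable_const hWint,
      intervalIntegral.integral_const]
    field_simp
    ring
  rw [hdiff]
  -- integrate the bound
  have hcontg : ContinuousOn (fun s => x/2 * ((1+u+s)^2)⁻¹ - x/2 * ((1+u+r)^2)⁻¹)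
      (Set.uIcc (0:ℝ) r) := by
    apply ContinuousOn.sub _ continuousOn_const
    apply ContinuousOn.mul continuousOn_const
    apply ContinuousOn.inv₀ (by fun_prop)
    intro t ht
    rw [Set.uIcc_of_le hr] at ht
    have := hpos t ht.1
    positivity
  have hintg : IntervalIntegrable
      (fun s => x/2 * ((1+u+s)^2)⁻¹ - x/2 * ((1+u+r)^2)⁻¹) volume 0 r :=
    hcontg.intervalIntegrable
  have hd2 : ∀ t ∈ Set.uIcc (0:ℝ) r,
      HasDerivAt (fun t => -(x/2) * (1+u+t)⁻¹) (x/2 * ((1+u+t)^2)⁻¹) t := by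
    intro t ht
    rw [Set.uIcc_of_le hr] at ht
    have htp : (0:ℝ) < 1 + u + t := hpos t ht.1
    have h1 : HasDerivAt (fun t : ℝ => 1 + u + t) 1 t := (hasDerivAt_id t).const_add (1+u)
    have h3 := (h1.inv (ne_of_gt htp)).const_mul (-(x/2))
    refine h3.congr_deriv ?_
    field_simp
  have hint2 : IntervalIntegrable (fun t => x/2 * ((1+u+t)^2)⁻¹) volume 0 r := by
    apply ContinuousOn.intervalIntegrable
    apply ContinuousOn.mul continuousOn_const
    apply ContinuousOn.inv₀ (by fun_prop)
    intro t ht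
    rw [Set.uIcc_of_le hr] at ht
    have := hpos t ht.1
    positivity
  have hintval : ∫ s in (0:ℝ)..r, (x/2 * ((1+u+s)^2)⁻¹ - x/2 * ((1+u+r)^2)⁻¹)
      = x/2 * ((1+u)⁻¹ - (1+u+r)⁻¹) - r * (x/2 * ((1+u+r)^2)⁻¹) := by
    rw [intervalIntegral.integral_sub hint2 intervalIntegrable_const,
      intervalIntegral.integral_eq_sub_of_hasDerivAt hd2 hint2,
      intervalIntegral.integral_const]
    simp
    ring
  have hbnd : |∫ s in (0:ℝ)..r, (W u r - W u s)|
      ≤ x/2 * ((1+u)⁻¹ - (1+u+r)⁻¹) - r * (x/2 * ((1+u+r)^2)⁻¹) := by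
    rw [← hintval]
    calc |∫ s in (0:ℝ)..r, (W u r - W u s)| ≤ ∫ s in (0:ℝ)..r, |W u r - W u s| :=
          intervalIntegral.abs_integral_le_integral_abs hr
      _ ≤ _ := by
          apply intervalIntegral.integral_mono_on hr _ hintg
          · intro t ht
            exact hkey t ht
          · exact ((continuous_const.sub hWcont).abs.intervalIntegrable 0 r)
  rw [abs_mul, abs_of_pos (by positivity : (0:ℝ) < 1/r)]
  have : (1/r) * |∫ s in (0:ℝ)..r, (W u r - W u s)|
      ≤ (1/r) * (x/2 * ((1+u)⁻¹ - (1+u+r)⁻¹) - r * (x/2 * ((1+u+r)^2)⁻¹)) :=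
    mul_le_mul_of_nonneg_left hbnd (by positivity)
  refine this.trans (le_of_eq ?_)
  field_simp
  ring
end

section
/- If W₁, W₂ are continuous with |W_j(u,s)| ≤ x(1+u+s)^{-2}, |W̄_j(u,s)| ≤ x((1+u)(1+u+s))^{-1}, and |W₁ − W₂|, |W̄₁ − W̄₂| ≤ y(1+u+s)^{-2}, then the corresponding local charges Q_j(u,r) = ∫₀^r s (h̄_j k_j − k̄_j h_j) ds satisfy |Q₁(u,r) − Q₂(u,r)| ≤ x y r² / ((1+u)²(1+u+r)²). -/
open intervalIntegral

set_option maxHeartbeats 1000000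

theorem stmt16 (h₁ k₁ h₂ k₂ hb₁ kb₁ hb₂ kb₂ : ℝ → ℝ → ℝ) (u r x y : ℝ)
    (hu : 0 ≤ u) (hr : 0 ≤ r) (hx : 0 ≤ x) (hy : 0 ≤ y)
    (hc : Continuous (h₁ u) ∧ Continuous (k₁ u) ∧ Continuous (h₂ u) ∧ Continuous (k₂ u) ∧
      Continuous (hb₁ u) ∧ Continuous (kb₁ u) ∧ Continuous (hb₂ u) ∧ Continuous (kb₂ u))
    (hW₁ : ∀ s, 0 ≤ s → |h₁ u s| + |k₁ u s| ≤ x / (1 + u + s) ^ 2)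
    (hW₂ : ∀ s, 0 ≤ s → |h₂ u s| + |k₂ u s| ≤ x / (1 + u + s) ^ 2)
    (hWb₁ : ∀ s, 0 ≤ s → |hb₁ u s| + |kb₁ u s| ≤ x / ((1 + u) * (1 + u + s)))
    (hWb₂ : ∀ s, 0 ≤ s → |hb₂ u s| + |kb₂ u s| ≤ x / ((1 + u) * (1 + u + s)))
    (hdiff : ∀ s, 0 ≤ s → |h₁ u s - h₂ u s| + |k₁ u s - k₂ u s| ≤ y / (1 + u + s) ^ 2)
    (hdiffb : ∀ s, 0 ≤ s →
      |hb₁ u s - hb₂ u s| + |kb₁ u s - kb₂ u s| ≤ y / (1 + u + s) ^ 2) :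
    |(∫ s in (0:ℝ)..r, s * (hb₁ u s * k₁ u s - kb₁ u s * h₁ u s)) -
        ∫ s in (0:ℝ)..r, s * (hb₂ u s * k₂ u s - kb₂ u s * h₂ u s)| ≤
      x * y * r ^ 2 / ((1 + u) ^ 2 * (1 + u + r) ^ 2) := by
  obtain ⟨ch₁, ck₁, ch₂, ck₂, chb₁, ckb₁, chb₂, ckb₂⟩ := hc
  set a : ℝ := 1 + u with ha
  clear_value a
  have ha1 : (1:ℝ) ≤ a := by simp only [ha]; linarith
  have ha0 : (0:ℝ) < a := by linarith
  -- integrability of both integrands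
  have hi₁ : IntervalIntegrable (fun s => s * (hb₁ u s * k₁ u s - kb₁ u s * h₁ u s))
      MeasureTheory.volume 0 r :=
    (continuous_id.mul ((chb₁.mul ck₁).sub (ckb₁.mul ch₁))).intervalIntegrable 0 r
  have hi₂ : IntervalIntegrable (fun s => s * (hb₂ u s * k₂ u s - kb₂ u s * h₂ u s))
      MeasureTheory.volume 0 r :=
    (continuous_id.mul ((chb₂.mul ck₂).sub (ckb₂.mul ch₂))).intervalIntegrable 0 r
  rw [← intervalIntegral.integral_sub hi₁ hi₂]
  -- the pointwise bound
  have key : ∀ s, 0 ≤ s →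
      |s * (hb₁ u s * k₁ u s - kb₁ u s * h₁ u s) -
        s * (hb₂ u s * k₂ u s - kb₂ u s * h₂ u s)| ≤ (2 * x * y / a) * (s / (a + s) ^ 3) := by
    intro s hs
    have hP : (1:ℝ) ≤ a + s := by linarith
    have hP0 : (0:ℝ) < a + s := by linarith
    have hA : hb₁ u s * k₁ u s - kb₁ u s * h₁ u s -
        (hb₂ u s * k₂ u s - kb₂ u s * h₂ u s) =
        (hb₁ u s * (k₁ u s - k₂ u s) - kb₁ u s * (h₁ u s - h₂ u s)) +
        ((hb₁ u s - hb₂ u s) * k₂ u s - (kb₁ u s - kb₂ u s) * h₂ u s) := by ring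
    have habs : |hb₁ u s * k₁ u s - kb₁ u s * h₁ u s -
        (hb₂ u s * k₂ u s - kb₂ u s * h₂ u s)| ≤
        (|hb₁ u s| + |kb₁ u s|) * (|h₁ u s - h₂ u s| + |k₁ u s - k₂ u s|) +
        (|hb₁ u s - hb₂ u s| + |kb₁ u s - kb₂ u s|) * (|h₂ u s| + |k₂ u s|) := by
      rw [hA]
      refine (abs_add_le _ _).trans (add_le_add ?_ ?_)
      · refine (abs_sub _ _).trans ?_
        rw [abs_mul, abs_mul]
        nlinarith [abs_nonneg (hb₁ u s), abs_nonneg (kb₁ u s),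
          abs_nonneg (h₁ u s - h₂ u s), abs_nonneg (k₁ u s - k₂ u s)]
      · refine (abs_sub _ _).trans ?_
        rw [abs_mul, abs_mul]
        nlinarith [abs_nonneg (hb₁ u s - hb₂ u s), abs_nonneg (kb₁ u s - kb₂ u s),
          abs_nonneg (h₂ u s), abs_nonneg (k₂ u s)]
    have h1 : (|hb₁ u s| + |kb₁ u s|) * (|h₁ u s - h₂ u s| + |k₁ u s - k₂ u s|) ≤
        (x / (a * (a + s))) * (y / (a + s) ^ 2) := by
      apply mul_le_mul (hWb₁ s hs) (hdiff s hs)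
        (by positivity) (by positivity)
    have h2 : (|hb₁ u s - hb₂ u s| + |kb₁ u s - kb₂ u s|) * (|h₂ u s| + |k₂ u s|) ≤
        (y / (a + s) ^ 2) * (x / (a + s) ^ 2) := by
      apply mul_le_mul (hdiffb s hs) (hW₂ s hs)
        (by positivity) (by positivity)
    have h3 : (y / (a + s) ^ 2) * (x / (a + s) ^ 2) ≤ (x / (a * (a + s))) * (y / (a + s) ^ 2) := by
      rw [div_mul_div_comm, div_mul_div_comm]
      exact div_le_div₀ (by positivity) (by nlinarith) (by positivity) (by nlinarith)
    rw [← mul_sub, abs_mul, abs_of_nonneg hs]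
    have : |hb₁ u s * k₁ u s - kb₁ u s * h₁ u s -
        (hb₂ u s * k₂ u s - kb₂ u s * h₂ u s)| ≤ 2 * ((x / (a * (a + s))) * (y / (a + s) ^ 2)) := by
      linarith
    calc s * |hb₁ u s * k₁ u s - kb₁ u s * h₁ u s - (hb₂ u s * k₂ u s - kb₂ u s * h₂ u s)|
        ≤ s * (2 * ((x / (a * (a + s))) * (y / (a + s) ^ 2))) := by
          exact mul_le_mul_of_nonneg_left this hs
      _ = (2 * x * y / a) * (s / (a + s) ^ 3) := by field_simp
  -- bound the integral by the integral of the bound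
  have hbound_cont : ContinuousOn (fun s : ℝ => (2 * x * y / a) * (s / (a + s) ^ 3))
      (Set.uIcc 0 r) := by
    apply ContinuousOn.mul continuousOn_const
    apply ContinuousOn.div continuousOn_id (by fun_prop)
    intro s hs
    rw [Set.uIcc_of_le hr] at hs
    have : 0 < a + s := by linarith [hs.1]
    positivity
  have hbound_int : IntervalIntegrable (fun s : ℝ => (2 * x * y / a) * (s / (a + s) ^ 3))
      MeasureTheory.volume 0 r := hbound_cont.intervalIntegrable
  have step1 : |∫ s in (0:ℝ)..r, (s * (hb₁ u s * k₁ u s - kb₁ u s * h₁ u s) -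
        s * (hb₂ u s * k₂ u s - kb₂ u s * h₂ u s))| ≤
      |∫ s in (0:ℝ)..r, (2 * x * y / a) * (s / (a + s) ^ 3)| := by
    rw [← Real.norm_eq_abs (∫ s in (0:ℝ)..r, (s * (hb₁ u s * k₁ u s - kb₁ u s * h₁ u s) -
        s * (hb₂ u s * k₂ u s - kb₂ u s * h₂ u s)))]
    refine intervalIntegral.norm_integral_le_abs_of_norm_le ?_ hbound_int
    refine MeasureTheory.ae_restrict_of_forall_mem measurableSet_uIoc fun s hs => ?_
    rw [Set.uIoc_of_le hr] at hs
    exact key s hs.1.le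
  -- compute the bound integral
  have hderiv : ∀ s ∈ Set.uIcc (0:ℝ) r, HasDerivAt
      (fun s : ℝ => -(a + s)⁻¹ + (a / 2) * ((a + s) ^ 2)⁻¹) (s / (a + s) ^ 3) s := by
    intro s hs
    rw [Set.uIcc_of_le hr] at hs
    have hP0 : (0:ℝ) < a + s := by linarith [hs.1]
    have hid : HasDerivAt (fun s : ℝ => a + s) 1 s := (hasDerivAt_id s).const_add a
    have d1 := hid.inv hP0.ne'
    have d2 := (hid.pow 2).inv (pow_ne_zero 2 hP0.ne')
    have := (d1.neg).add (d2.const_mul (a / 2))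
    refine this.congr_deriv ?_
    simp only [Pi.pow_apply]
    field_simp
    ring
  have hcomp : (∫ s in (0:ℝ)..r, s / (a + s) ^ 3) = r ^ 2 / (2 * a * (a + r) ^ 2) := by
    have hc2 : ContinuousOn (fun s : ℝ => s / (a + s) ^ 3) (Set.uIcc 0 r) := by
      apply ContinuousOn.div continuousOn_id (by fun_prop)
      intro s hs
      rw [Set.uIcc_of_le hr] at hs
      have : 0 < a + s := by linarith [hs.1]
      positivity
    rw [intervalIntegral.integral_eq_sub_of_hasDerivAt hderiv hc2.intervalIntegrable]
    have h0 : (0:ℝ) < a + r := by linarith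
    field_simp
    ring
  have step2 : (∫ s in (0:ℝ)..r, (2 * x * y / a) * (s / (a + s) ^ 3)) =
      x * y * r ^ 2 / (a ^ 2 * (a + r) ^ 2) := by
    rw [intervalIntegral.integral_const_mul, hcomp]
    have h0 : (0:ℝ) < a + r := by linarith
    field_simp
  have h0 : (0:ℝ) < a + r := by linarith
  refine step1.trans ?_
  rw [step2, abs_of_nonneg (by positivity), ha]
end
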